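/- For every α > 0 and every finitely supported sequence x : ℕ₊ → ℂ, the quadratic form of K_α has the integral representation ∑_{n=1}^∞ ∑_{m=1}^∞ k_α(n,m) x(m) · conj(x(n)) = (1/2π) ∫_{−∞}^∞ |∑_{n=1}^∞ x(n) n^(−1/2−it)|² · (2α/(α² + t²)) dt. -/

import Mathlib

open scoped BigOperators

/-- The Hardy kernel `k_α(n,m) = (nm)^(-1/2+α) / max(n,m)^(2α)` on the positive integers. -/
noncomputable def kmat (α : ℝ) (n m : ℕ+) : ℝ :=
  ((n : ℝ) * (m : ℝ)) ^ (-(1/2 : ℝ) + α) / (max (n : ℝ) (m : ℝ)) ^ (2 * α)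

open MeasureTheory Real Set Complex Filter
open scoped FourierTransform

lemma integral_cexp_neg_mul_Ioi {c : ℂ} (hc : 0 < c.re) :
    ∫ x : ℝ in Ioi (0:ℝ), Complex.exp (-(c * x)) = 1 / c := by
  have hc0 : c ≠ 0 := fun h => by simp [h] at hc
  have hint : IntegrableOn (fun x : ℝ => Complex.exp (-(c * x))) (Ioi 0) := by
    refine (integrable_norm_iff ?_).mp ?_
    · exact (Complex.continuous_exp.comp (by continuity)).aestronglyMeasurable
    · refine (exp_neg_integrableOn_Ioi 0 hc).congr_fun (fun x hx => ?_) measurableSet_Ioi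
      rw [Complex.norm_exp]
      norm_num [mul_comm]
  have h1 := intervalIntegral_tendsto_integral_Ioi 0 hint tendsto_id
  have h2 : Filter.Tendsto (fun b : ℝ => ∫ x in (0:ℝ)..b, Complex.exp (-(c * x)))
      atTop (nhds (1 / c)) := by
    have heq : ∀ b : ℝ, (∫ x in (0:ℝ)..b, Complex.exp (-(c * x)))
        = (Complex.exp (-c * b) - 1) / (-c) := by
      intro b
      simp_rw [← neg_mul c]
      rw [integral_exp_mul_complex (neg_ne_zero.mpr hc0)]
      simp
    simp_rw [heq]
    have : Filter.Tendsto (fun b : ℝ => Complex.exp (-c * b)) atTop (nhds 0) := by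
      rw [tendsto_zero_iff_norm_tendsto_zero]
      simp_rw [Complex.norm_exp]
      have : ∀ b : ℝ, (-c * b).re = -(c.re * b) := by intro b; simp
      simp_rw [this]
      exact Real.tendsto_exp_atBot.comp
        (tendsto_neg_atBot_iff.mpr (tendsto_id.const_mul_atTop hc))
    have h3 : Filter.Tendsto (fun b : ℝ => (Complex.exp (-c * b) - 1) / (-c)) atTop
        (nhds ((0 - 1) / (-c))) := (this.sub_const 1).div_const _
    simpa using h3
  exact tendsto_nhds_unique h1 h2

lemma integrable_exp_neg_abs (a : ℝ) (ha : 0 < a) :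
    Integrable (fun t : ℝ => Real.exp (-(a * |t|))) := by
  have h1 : IntegrableOn (fun t : ℝ => Real.exp (-(a * |t|))) (Ioi 0) := by
    refine (exp_neg_integrableOn_Ioi 0 ha).congr_fun (fun x hx => ?_) measurableSet_Ioi
    rw [abs_of_pos hx]; simp only [neg_mul]
  have h2 : IntegrableOn (fun t : ℝ => Real.exp (-(a * |t|))) (Iic 0) := by
    rw [← Measure.map_neg_eq_self (volume : Measure ℝ)]
    let m : MeasurableEmbedding fun x : ℝ => -x := (Homeomorph.neg ℝ).measurableEmbedding
    rw [m.integrableOn_map_iff]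
    simp_rw [Function.comp_def, abs_neg, neg_preimage, neg_Iic, neg_zero]
    exact Iff.mpr integrableOn_Ici_iff_integrableOn_Ioi h1
  have := h2.union h1
  rwa [Iic_union_Ioi, integrableOn_univ] at this

lemma fourier_exp_neg_abs (a : ℝ) (ha : 0 < a) (w : ℝ) :
    𝓕 (fun t : ℝ => (Real.exp (-(a * |t|)) : ℂ)) w
      = ((2 * a / (a ^ 2 + (2 * π * w) ^ 2) : ℝ) : ℂ) := by
  have hc1 : (0:ℝ) < ((a : ℂ) + (2 * π * w) * Complex.I).re := by simp [ha]
  have hc2 : (0:ℝ) < ((a : ℂ) - (2 * π * w) * Complex.I).re := by simp [ha]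
  rw [Real.fourier_real_eq_integral_exp_smul]
  have hint : Integrable (fun v : ℝ =>
      Complex.exp (↑(-2 * π * v * w) * Complex.I) • (Real.exp (-(a * |v|)) : ℂ)) := by
    refine (Integrable.bdd_mul (c := 1) ((integrable_exp_neg_abs a ha).ofReal) ?_ (Filter.Eventually.of_forall fun v => ?_))
    · exact (Complex.continuous_exp.comp (by continuity)).aestronglyMeasurable
    · rw [Complex.norm_exp]
      simp
  have hsplit : (∫ v : ℝ, Complex.exp (↑(-2 * π * v * w) * Complex.I)
        • (Real.exp (-(a * |v|)) : ℂ))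
      = (∫ v in Iic (0:ℝ), Complex.exp (↑(-2 * π * v * w) * Complex.I)
        • (Real.exp (-(a * |v|)) : ℂ))
      + ∫ v in Ioi (0:ℝ), Complex.exp (↑(-2 * π * v * w) * Complex.I)
        • (Real.exp (-(a * |v|)) : ℂ) := by
    rw [← setIntegral_union (Iic_disjoint_Ioi le_rfl) measurableSet_Ioi
      hint.integrableOn hint.integrableOn, Iic_union_Ioi, Measure.restrict_univ]
  rw [hsplit]
  have hIoi : (∫ v in Ioi (0:ℝ), Complex.exp (↑(-2 * π * v * w) * Complex.I)
        • (Real.exp (-(a * |v|)) : ℂ))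
      = 1 / ((a : ℂ) + (2 * π * w) * Complex.I) := by
    rw [← integral_cexp_neg_mul_Ioi hc1]
    refine setIntegral_congr_fun measurableSet_Ioi (fun x hx => ?_)
    rw [abs_of_pos hx, smul_eq_mul, Complex.ofReal_exp, ← Complex.exp_add]
    congr 1
    push_cast
    ring
  have hIic : (∫ v in Iic (0:ℝ), Complex.exp (↑(-2 * π * v * w) * Complex.I)
        • (Real.exp (-(a * |v|)) : ℂ))
      = 1 / ((a : ℂ) - (2 * π * w) * Complex.I) := by
    have hcn := integral_comp_neg_Ioi (0:ℝ)
      (fun v => Complex.exp (↑(-2 * π * v * w) * Complex.I) • ((Real.exp (-(a * |v|)) : ℝ) : ℂ))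
    simp only [neg_zero] at hcn
    rw [← hcn, ← integral_cexp_neg_mul_Ioi hc2]
    refine setIntegral_congr_fun measurableSet_Ioi (fun x hx => ?_)
    simp only [abs_neg]
    rw [abs_of_pos hx, smul_eq_mul, Complex.ofReal_exp, ← Complex.exp_add]
    congr 1
    push_cast
    ring
  rw [hIoi, hIic]
  have h1 : ((a : ℂ) + (2 * π * w) * Complex.I) ≠ 0 := fun h => by simp [h] at hc1
  have h2 : ((a : ℂ) - (2 * π * w) * Complex.I) ≠ 0 := fun h => by simp [h] at hc2
  have hd : (0:ℝ) < a ^ 2 + (2 * π * w) ^ 2 := by positivity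
  rw [div_add_div _ _ h2 h1]
  have hprod : ((a:ℂ) - (2*π*w)*Complex.I) * ((a:ℂ) + (2*π*w)*Complex.I)
      = ((a^2 + (2*π*w)^2 : ℝ) : ℂ) := by
    push_cast
    ring_nf
    rw [Complex.I_sq]
    ring
  rw [hprod, Complex.ofReal_div]
  congr 1
  push_cast
  ring

lemma integrable_poisson (a : ℝ) (ha : 0 < a) :
    Integrable (fun t : ℝ => 2 * a / (a ^ 2 + t ^ 2)) := by
  have h : Integrable (fun t : ℝ => (2/a) * (1 + (a⁻¹ * t) ^ 2)⁻¹) :=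
    (integrable_inv_one_add_sq.comp_mul_left' (inv_ne_zero ha.ne')).const_mul _
  have he : (fun t : ℝ => 2 * a / (a ^ 2 + t ^ 2))
      = fun t : ℝ => (2/a) * (1 + (a⁻¹ * t) ^ 2)⁻¹ := by
    funext t
    have h0 : a ^ 2 + t ^ 2 ≠ 0 := by positivity
    field_simp
  rw [he]
  exact h

lemma key_integral (a : ℝ) (ha : 0 < a) (b : ℝ) :
    ∫ t : ℝ, Complex.exp (↑(b * t) * Complex.I) * ((2 * a / (a ^ 2 + t ^ 2) : ℝ) : ℂ)
      = ((2 * π * Real.exp (-(a * |b|)) : ℝ) : ℂ) := by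
  set f : ℝ → ℂ := fun t => ((Real.exp (-(a * |t|)) : ℝ) : ℂ) with hfdef
  have hf : Integrable f := (integrable_exp_neg_abs a ha).ofReal
  have h2 : 𝓕 f = fun w : ℝ => ((2 * a / (a ^ 2 + (2 * π * w) ^ 2) : ℝ) : ℂ) :=
    funext (fourier_exp_neg_abs a ha)
  have h3 : Integrable (𝓕 f) := by
    rw [h2]
    refine Integrable.ofReal ?_
    have h4 : (2 * π : ℝ) ≠ 0 := by positivity
    exact (integrable_poisson a ha).comp_mul_left' h4
  have hcont : ContinuousAt f b := by
    refine Continuous.continuousAt ?_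
    exact Complex.continuous_ofReal.comp (Real.continuous_exp.comp (by continuity))
  have hinv := hf.fourierInv_fourier_eq h3 hcont
  rw [Real.fourierInv_eq_fourier_neg, h2] at hinv
  rw [Real.fourier_real_eq_integral_exp_smul] at hinv
  have hg := MeasureTheory.Measure.integral_comp_mul_left
    (fun t : ℝ => Complex.exp (↑(b * t) * Complex.I) * ((2 * a / (a ^ 2 + t ^ 2) : ℝ) : ℂ))
    (2 * π)
  beta_reduce at hinv hg
  have heq : (∫ v : ℝ, Complex.exp (↑(-2 * π * v * -b) * Complex.I)
        • (((2 * a / (a ^ 2 + (2 * π * v) ^ 2) : ℝ) : ℂ)))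
      = ∫ x : ℝ, Complex.exp (↑(b * (2 * π * x)) * Complex.I)
        * ((2 * a / (a ^ 2 + (2 * π * x) ^ 2) : ℝ) : ℂ) := by
    congr 1
    funext v
    rw [smul_eq_mul]
    congr 2
    push_cast
    ring
  rw [heq, hg] at hinv
  have habs : |(2 * π : ℝ)⁻¹| = (2 * π)⁻¹ := abs_of_pos (by positivity)
  rw [habs] at hinv
  have h5 : (∫ t : ℝ, Complex.exp (↑(b * t) * Complex.I) * ((2 * a / (a ^ 2 + t ^ 2) : ℝ) : ℂ))
      = (2 * π : ℝ) • f b := by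
    rw [← hinv, smul_smul, mul_inv_cancel₀ (by positivity : (2*π:ℝ) ≠ 0), one_smul]
  rw [h5, hfdef]
  rw [Complex.real_smul]
  push_cast
  ring

lemma rpow_aux {N M α : ℝ} (hN : 0 < N) (hM : 0 < M) (h : N ≤ M) :
    (N * M) ^ (-(1/2 : ℝ) + α) / M ^ (2 * α)
      = N ^ (-(1/2) : ℝ) * M ^ (-(1/2) : ℝ) * Real.exp (-(α * (Real.log M - Real.log N))) := by
  have e1 : Real.exp (-(α * (Real.log M - Real.log N))) = N ^ α * M ^ (-α) := by
    rw [Real.rpow_def_of_pos hN, Real.rpow_def_of_pos hM, ← Real.exp_add]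
    congr 1
    ring
  have e2 : M ^ (2 * α) = M ^ α * M ^ α := by
    rw [← Real.rpow_add hM]
    ring_nf
  rw [Real.mul_rpow hN.le hM.le, Real.rpow_add hN, Real.rpow_add hM, e1, e2,
    Real.rpow_neg hM.le α]
  have h3 : M ^ α ≠ 0 := by positivity
  field_simp

lemma kmat_eq' (α : ℝ) (n m : ℕ+) :
    ((n : ℝ) * (m : ℝ)) ^ (-(1/2 : ℝ) + α) / (max (n : ℝ) (m : ℝ)) ^ (2 * α)
      = (n : ℝ) ^ (-(1/2) : ℝ) * (m : ℝ) ^ (-(1/2) : ℝ)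
        * Real.exp (-(α * |Real.log (n : ℝ) - Real.log (m : ℝ)|)) := by
  have hn : (0:ℝ) < (n : ℝ) := by exact_mod_cast n.pos
  have hm : (0:ℝ) < (m : ℝ) := by exact_mod_cast m.pos
  rcases le_total ((n:ℝ)) ((m:ℝ)) with h | h
  · rw [max_eq_right h, abs_of_nonpos (by simp [Real.log_le_log_iff hn hm, h] : Real.log (n:ℝ) - Real.log (m:ℝ) ≤ 0)]
    rw [rpow_aux hn hm h]
    ring_nf
  · rw [max_eq_left h, _root_.abs_of_nonneg (by simp [sub_nonneg, Real.log_le_log_iff hm hn, h] : (0:ℝ) ≤ Real.log (n:ℝ) - Real.log (m:ℝ))]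
    rw [mul_comm ((n:ℝ)) ((m:ℝ)), rpow_aux hm hn h]
    ring_nf

noncomputable def Efun (n : ℕ+) (t : ℝ) : ℂ := (n : ℂ) ^ (-(1/2 : ℂ) - Complex.I * (t : ℂ))

lemma Efun_eq (n : ℕ+) (t : ℝ) :
    Efun n t = (((n : ℝ) ^ (-(1/2) : ℝ) : ℝ) : ℂ)
      * Complex.exp (((-(Real.log (n : ℝ) * t) : ℝ) : ℂ) * Complex.I) := by
  have hn : (0:ℝ) < (n : ℝ) := by exact_mod_cast n.pos
  have hne : ((n : ℕ+) : ℂ) ≠ 0 := by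
    simp only [ne_eq, Nat.cast_eq_zero]
    exact_mod_cast n.pos.ne'
  rw [Efun, Complex.cpow_def_of_ne_zero hne]
  have hcast : ((n : ℕ+) : ℂ) = (((n : ℝ) : ℝ) : ℂ) := by push_cast; ring
  rw [hcast, ← Complex.ofReal_log hn.le]
  rw [Real.rpow_def_of_pos hn, Complex.ofReal_exp, ← Complex.exp_add]
  congr 1
  push_cast
  ring

lemma conj_Efun (n : ℕ+) (t : ℝ) :
    (starRingEnd ℂ) (Efun n t) = (((n : ℝ) ^ (-(1/2) : ℝ) : ℝ) : ℂ)
      * Complex.exp (((Real.log (n : ℝ) * t : ℝ) : ℂ) * Complex.I) := by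
  rw [Efun_eq, map_mul, Complex.conj_ofReal, ← Complex.exp_conj, map_mul,
    Complex.conj_ofReal, Complex.conj_I]
  congr 1
  push_cast
  ring

lemma integrable_kernel (α : ℝ) (hα : 0 < α) (b : ℝ) :
    Integrable (fun t : ℝ => Complex.exp (((b * t : ℝ) : ℂ) * Complex.I)
      * ((2 * α / (α ^ 2 + t ^ 2) : ℝ) : ℂ)) := by
  refine Integrable.bdd_mul (c := 1) ((integrable_poisson α hα).ofReal) ?_ (Filter.Eventually.of_forall fun v => ?_)
  · exact (Complex.continuous_exp.comp (by continuity)).aestronglyMeasurable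
  · rw [Complex.norm_exp]
    simp

lemma exp_split (r u : ℝ) :
    Complex.exp (((r + u : ℝ) : ℂ) * Complex.I)
      = Complex.exp ((r : ℂ) * Complex.I) * Complex.exp ((u : ℂ) * Complex.I) := by
  rw [← Complex.exp_add]
  congr 1
  push_cast
  ring

/-- Integral representation of the quadratic form of `K_α` on finitely supported sequences:
`∑ₙ ∑ₘ k_α(n,m) x(m) conj(x(n)) = (1/2π) ∫ |∑ₙ x(n) n^(-1/2-it)|² · 2α/(α²+t²) dt`. -/
theorem quadratic_form_integral_representation (α : ℝ) (hα : 0 < α)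
    (x : ℕ+ → ℂ) (hx : (Function.support x).Finite) :
    ∑' n : ℕ+, ∑' m : ℕ+, (kmat α n m : ℂ) * x m * (starRingEnd ℂ) (x n)
      = (((1 / (2 * Real.pi)) * ∫ t : ℝ,
          ‖∑' n : ℕ+, x n * ((n : ℂ) ^ (-(1/2 : ℂ) - Complex.I * (t : ℂ)))‖ ^ 2
            * (2 * α / (α ^ 2 + t ^ 2)) : ℝ) : ℂ) := by
  classical
  set s := hx.toFinset with hs
  have hmem : ∀ n : ℕ+, n ∉ s → x n = 0 := fun n hn => by
    rwa [hs, Set.Finite.mem_toFinset, Function.mem_support, not_not] at hn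
  -- LHS
  have hLHS : (∑' n : ℕ+, ∑' m : ℕ+, (kmat α n m : ℂ) * x m * (starRingEnd ℂ) (x n))
      = ∑ n ∈ s, ∑ m ∈ s, (kmat α n m : ℂ) * x m * (starRingEnd ℂ) (x n) := by
    rw [tsum_eq_sum (s := s) (fun n hn => by simp [hmem n hn])]
    exact Finset.sum_congr rfl fun n _ =>
      tsum_eq_sum fun m hm => by rw [hmem m hm]; ring
  -- RHS : finite sum form of the Dirichlet polynomial
  set S : ℝ → ℂ := fun t => ∑ n ∈ s, x n * Efun n t with hSdef
  have htsum : ∀ t : ℝ, (∑' n : ℕ+, x n * ((n : ℂ) ^ (-(1/2 : ℂ) - Complex.I * (t : ℂ)))) = S t :=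
    fun t => tsum_eq_sum fun n hn => by rw [hmem n hn, zero_mul]
  have hfeq : (fun t : ℝ => ‖∑' n : ℕ+, x n * ((n : ℂ) ^ (-(1/2 : ℂ) - Complex.I * (t : ℂ)))‖ ^ 2
        * (2 * α / (α ^ 2 + t ^ 2)))
      = fun t : ℝ => ‖S t‖ ^ 2 * (2 * α / (α ^ 2 + t ^ 2)) := funext fun t => by rw [htsum t]
  have hcoe : ((∫ t : ℝ, ‖S t‖ ^ 2 * (2 * α / (α ^ 2 + t ^ 2)) : ℝ) : ℂ)
      = ∫ t : ℝ, ((‖S t‖ ^ 2 * (2 * α / (α ^ 2 + t ^ 2)) : ℝ) : ℂ) :=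
    (integral_ofReal (𝕜 := ℂ)).symm
  rw [hLHS, hfeq, Complex.ofReal_mul, hcoe]
  -- now work with the complex-valued integral
  set C : ℕ+ → ℕ+ → ℂ := fun n m => x m * (starRingEnd ℂ) (x n)
    * (((m : ℝ) ^ (-(1/2) : ℝ) * (n : ℝ) ^ (-(1/2) : ℝ) : ℝ) : ℂ) with hCdef
  have hexp : ∀ (n m : ℕ+), (fun t : ℝ =>
        ((starRingEnd ℂ) (x n) * (starRingEnd ℂ) (Efun n t)) * (x m * Efun m t)
          * ((2 * α / (α ^ 2 + t ^ 2) : ℝ) : ℂ))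
      = fun t : ℝ => C n m * (Complex.exp ((((Real.log (n:ℝ) - Real.log (m:ℝ)) * t : ℝ) : ℂ)
          * Complex.I) * ((2 * α / (α ^ 2 + t ^ 2) : ℝ) : ℂ)) := by
    intro n m
    funext t
    rw [Efun_eq m, conj_Efun n,
      show ((Real.log (n:ℝ) - Real.log (m:ℝ)) * t : ℝ)
        = -(Real.log (m:ℝ) * t) + Real.log (n:ℝ) * t from by ring,
      exp_split, hCdef]
    push_cast
    ring
  have hintg : ∀ (n m : ℕ+), Integrable (fun t : ℝ =>
      ((starRingEnd ℂ) (x n) * (starRingEnd ℂ) (Efun n t)) * (x m * Efun m t)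
        * ((2 * α / (α ^ 2 + t ^ 2) : ℝ) : ℂ)) := fun n m => by
    rw [hexp n m]
    exact (integrable_kernel α hα _).const_mul _
  have hval : ∀ (n m : ℕ+), (∫ t : ℝ,
      ((starRingEnd ℂ) (x n) * (starRingEnd ℂ) (Efun n t)) * (x m * Efun m t)
        * ((2 * α / (α ^ 2 + t ^ 2) : ℝ) : ℂ))
      = C n m * ((2 * Real.pi * Real.exp (-(α * |Real.log (n:ℝ) - Real.log (m:ℝ)|)) : ℝ) : ℂ) := by
    intro n m
    rw [hexp n m, MeasureTheory.integral_const_mul, key_integral α hα]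
  have hsum : (fun t : ℝ => ((‖S t‖ ^ 2 * (2 * α / (α ^ 2 + t ^ 2)) : ℝ) : ℂ))
      = fun t : ℝ => ∑ n ∈ s, ∑ m ∈ s,
        ((starRingEnd ℂ) (x n) * (starRingEnd ℂ) (Efun n t)) * (x m * Efun m t)
          * ((2 * α / (α ^ 2 + t ^ 2) : ℝ) : ℂ) := by
    funext t
    have h1 : ((‖S t‖ ^ 2 : ℝ) : ℂ) = (starRingEnd ℂ) (S t) * S t := by
      rw [← Complex.normSq_eq_conj_mul_self, Complex.normSq_eq_norm_sq]
    rw [Complex.ofReal_mul, h1, hSdef]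
    simp only [map_sum, map_mul]
    rw [Finset.sum_mul_sum, Finset.sum_mul]
    refine Finset.sum_congr rfl fun n _ => ?_
    rw [Finset.sum_mul]
  rw [hsum, integral_finset_sum s (fun n _ => integrable_finset_sum s (fun m _ => hintg n m))]
  rw [Finset.mul_sum]
  refine Finset.sum_congr rfl fun n _ => ?_
  rw [integral_finset_sum s (fun m _ => hintg n m), Finset.mul_sum]
  refine Finset.sum_congr rfl fun m _ => ?_
  rw [hval n m]
  rw [(by rfl : kmat α n m
      = ((n:ℝ) * (m:ℝ)) ^ (-(1/2 : ℝ) + α) / (max (n:ℝ) (m:ℝ)) ^ (2 * α)),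
    kmat_eq' α n m, hCdef]
  have hπ : ((Real.pi : ℝ) : ℂ) ≠ 0 := Complex.ofReal_ne_zero.mpr Real.pi_ne_zero
  push_cast
  field_simp
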